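/- Let k be a perfect field of prime characteristic p, let t ≥ 1 be an integer with t ≤ min{d, p} and p ≡ 1 (mod t), and let f = x₁^t + x₂^t + ⋯ + x_d^t ∈ k[x₁,…,x_d]. Then f has level one, i.e., I_1(f^{p−1}) = R. -/

import Mathlib

open MvPolynomial

/-- `J^[q]`: the ideal generated by the `q`-th powers of the elements of `J`. -/
def bracketPow {R : Type*} [CommRing R] (q : ℕ) (J : Ideal R) : Ideal R :=
  Ideal.span ((fun a => a ^ q) '' (J : Set R))

/-- `I_e(g)` (for the prime `p`): the smallest ideal `J` with `g ∈ J^[p^e]`. -/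
def rootIdeal {R : Type*} [CommRing R] (p e : ℕ) (g : R) : Ideal R :=
  sInf {J : Ideal R | g ∈ bracketPow (p ^ e) J}

/-- `f` has level `e`: `e` is the least integer `≥ 1` such that
`f^(p^e - p) ∈ (I_e(f^(p^e - 1)))^[p^e]`. -/
def HasLevel {R : Type*} [CommRing R] (p : ℕ) (f : R) (e : ℕ) : Prop :=
  IsLeast {e' : ℕ | 1 ≤ e' ∧
    f ^ (p ^ e' - p) ∈ bracketPow (p ^ e') (rootIdeal p e' (f ^ (p ^ e' - 1)))} e

section Aux

variable {k : Type*} [CommSemiring k] {d : ℕ}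

private lemma aux_coeff_pderiv (i : Fin d) (h : MvPolynomial (Fin d) k) (m : Fin d →₀ ℕ) :
    coeff m (pderiv i h) = (m i + 1 : ℕ) * coeff (m + Finsupp.single i 1) h := by
  induction h using MvPolynomial.induction_on' with
  | add f g hf hg => simp [hf, hg, mul_add]
  | monomial s a =>
    rw [pderiv_monomial, coeff_monomial, coeff_monomial]
    by_cases hs : s = m + Finsupp.single i 1
    · have h1 : s - Finsupp.single i 1 = m := by
        subst hs; exact add_tsub_cancel_right _ _
      have h2 : s i = m i + 1 := by subst hs; simp
      rw [if_pos h1, if_pos hs, h2, mul_comm]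
    · rw [if_neg hs, mul_zero]
      by_cases h2 : s - Finsupp.single i 1 = m
      · rw [if_pos h2]
        have hsi : s i = 0 := by
          by_contra hne
          apply hs
          have hle : Finsupp.single i 1 ≤ s := by
            rw [Finsupp.single_le_iff]; omega
          rw [← h2, tsub_add_cancel_of_le hle]
        rw [hsi]; simp
      · rw [if_neg h2]

private lemma aux_coeff_pderiv_iterate (i : Fin d) (n : ℕ) (h : MvPolynomial (Fin d) k)
    (m : Fin d →₀ ℕ) :
    coeff m ((pderiv i)^[n] h) =
      ((m i + 1).ascFactorial n : ℕ) * coeff (m + Finsupp.single i n) h := by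
  induction n generalizing h with
  | zero => simp
  | succ n ih =>
    rw [Function.iterate_succ_apply, ih, aux_coeff_pderiv]
    have h1 : (m + Finsupp.single i n) i + 1 = m i + n + 1 := by simp
    have h2 : m + Finsupp.single i n + Finsupp.single i 1 = m + Finsupp.single i (n + 1) := by
      rw [add_assoc, ← Finsupp.single_add]
    rw [h1, h2, Nat.ascFactorial_succ]
    push_cast
    ring

/-- The composite differential operator `∂_{idx 0}^n ∘ ⋯ ∘ ∂_{idx (j-1)}^n`. -/
private noncomputable def DD (n : ℕ) (idx : ℕ → Fin d) (j : ℕ)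
    (g : MvPolynomial (Fin d) k) : MvPolynomial (Fin d) k :=
  Nat.rec g (fun j' acc => (pderiv (idx j'))^[n] acc) j

private lemma DD_zero (n : ℕ) (idx : ℕ → Fin d) (g : MvPolynomial (Fin d) k) :
    DD n idx 0 g = g := rfl

private lemma DD_succ (n : ℕ) (idx : ℕ → Fin d) (j : ℕ) (g : MvPolynomial (Fin d) k) :
    DD n idx (j + 1) g = (pderiv (idx j))^[n] (DD n idx j g) := rfl

private lemma aux_iterate_pderiv_add (i : Fin d) (n : ℕ) (g h : MvPolynomial (Fin d) k) :
    (pderiv i)^[n] (g + h) = (pderiv i)^[n] g + (pderiv i)^[n] h := by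
  induction n generalizing g h with
  | zero => rfl
  | succ n ih => rw [Function.iterate_succ_apply, map_add, ih,
      Function.iterate_succ_apply, Function.iterate_succ_apply]

private lemma DD_add (n : ℕ) (idx : ℕ → Fin d) (j : ℕ) (g h : MvPolynomial (Fin d) k) :
    DD n idx j (g + h) = DD n idx j g + DD n idx j h := by
  induction j with
  | zero => rfl
  | succ j ih => rw [DD_succ, ih, aux_iterate_pderiv_add, DD_succ, DD_succ]

private lemma aux_pderiv_mul_pow (p : ℕ) (hp : (p : k) = 0) (i : Fin d)
    (r u : MvPolynomial (Fin d) k) :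
    pderiv i (r * u ^ p) = pderiv i r * u ^ p := by
  rw [pderiv_mul, pderiv_pow]
  have : ((p : ℕ) : MvPolynomial (Fin d) k) = 0 := by
    rw [← C_eq_coe_nat, hp, map_zero]
  rw [this]
  ring

private lemma aux_iterate_pderiv_mul_pow (p : ℕ) (hp : (p : k) = 0) (i : Fin d) (n : ℕ)
    (r u : MvPolynomial (Fin d) k) :
    (pderiv i)^[n] (r * u ^ p) = (pderiv i)^[n] r * u ^ p := by
  induction n generalizing r with
  | zero => rfl
  | succ n ih => rw [Function.iterate_succ_apply, aux_pderiv_mul_pow p hp, ih,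
      Function.iterate_succ_apply]

private lemma DD_mul_pow (p : ℕ) (hp : (p : k) = 0) (n : ℕ) (idx : ℕ → Fin d) (j : ℕ)
    (r u : MvPolynomial (Fin d) k) :
    DD n idx j (r * u ^ p) = DD n idx j r * u ^ p := by
  induction j with
  | zero => rfl
  | succ j ih => rw [DD_succ, ih, aux_iterate_pderiv_mul_pow p hp, DD_succ]

private lemma aux_totalDegree_pderiv (i : Fin d) (h : MvPolynomial (Fin d) k) (N : ℕ)
    (hN : h.totalDegree ≤ N + 1) : (pderiv i h).totalDegree ≤ N := by
  rw [totalDegree]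
  refine Finset.sup_le fun m hm => ?_
  by_contra hlt
  push_neg at hlt
  rw [mem_support_iff] at hm
  apply hm
  rw [aux_coeff_pderiv]
  have hz : coeff (m + Finsupp.single i 1) h = 0 := by
    apply coeff_eq_zero_of_totalDegree_lt
    show h.totalDegree < (m + Finsupp.single i 1).sum fun _ e => e
    rw [Finsupp.sum_add_index' (fun _ => rfl) (fun _ _ _ => rfl),
      Finsupp.sum_single_index rfl]
    exact Nat.lt_of_le_of_lt hN (Nat.succ_lt_succ hlt)
  rw [hz, mul_zero]

private lemma aux_totalDegree_pderiv_iterate (i : Fin d) (n : ℕ) (h : MvPolynomial (Fin d) k)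
    (N : ℕ) (hN : h.totalDegree ≤ N + n) : ((pderiv i)^[n] h).totalDegree ≤ N := by
  induction n generalizing N with
  | zero => simpa using hN
  | succ n ih =>
    rw [Function.iterate_succ_apply']
    apply aux_totalDegree_pderiv
    apply ih
    omega

private lemma DD_totalDegree (n : ℕ) (idx : ℕ → Fin d) (j : ℕ) (g : MvPolynomial (Fin d) k)
    (N : ℕ) (hN : g.totalDegree ≤ N + j * n) : (DD n idx j g).totalDegree ≤ N := by
  induction j generalizing N with
  | zero => simpa [DD_zero] using hN
  | succ j ih =>
    rw [DD_succ]
    refine aux_totalDegree_pderiv_iterate _ _ _ _ (ih _ ?_)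
    have : N + n + j * n = N + (j + 1) * n := by ring
    omega

private lemma DD_coeff (n : ℕ) (idx : ℕ → Fin d) (j : ℕ)
    (hidx : ∀ a < j, ∀ b < j, idx a = idx b → a = b)
    (g : MvPolynomial (Fin d) k) (m : Fin d →₀ ℕ) (hm : ∀ i < j, m (idx i) = 0) :
    coeff m (DD n idx j g)
      = (n.factorial : k) ^ j * coeff (m + ∑ i ∈ Finset.range j, Finsupp.single (idx i) n) g := by
  induction j generalizing m with
  | zero => simp [DD_zero]
  | succ j ih =>
    rw [DD_succ, aux_coeff_pderiv_iterate]
    simp only [hm j (Nat.lt_succ_self j), zero_add, Nat.one_ascFactorial]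
    rw [ih (fun a ha b hb hab => hidx a (by omega) b (by omega) hab) _
      (fun i hi => ?_)]
    · rw [Finset.sum_range_succ]
      have : m + Finsupp.single (idx j) n
          + ∑ i ∈ Finset.range j, Finsupp.single (idx i) n
          = m + ((∑ i ∈ Finset.range j, Finsupp.single (idx i) n)
            + Finsupp.single (idx j) n) := by
        rw [add_assoc, add_comm (Finsupp.single (idx j) n)]
      rw [this, pow_succ]
      ring
    · have hne : idx j ≠ idx i := fun hab =>
        absurd (hidx j (by omega) i (by omega) hab) (by omega)
      rw [Finsupp.add_apply, hm i (by omega), Finsupp.single_apply, if_neg hne, zero_add]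

private lemma aux_prod_X_pow (g : Fin d → ℕ) (S : Finset (Fin d)) :
    (∏ i ∈ S, (X i : MvPolynomial (Fin d) k) ^ g i)
      = monomial (∑ i ∈ S, Finsupp.single i (g i)) 1 := by
  classical
  induction S using Finset.induction_on with
  | empty => simp
  | insert a s ha ih =>
    rw [Finset.prod_insert ha, Finset.sum_insert ha, ih, X_pow_eq_monomial, monomial_mul, mul_one]

end Aux

/-- If `1 ≤ t ≤ min{d, p}` and `p ≡ 1 (mod t)`, then the diagonal hypersurface
`f = x₁^t + ⋯ + x_d^t` has level one, i.e. `I_1(f^(p-1)) = R`. -/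
theorem stmt_15 (p : ℕ) [Fact p.Prime] (k : Type*) [Field k] [CharP k p] [PerfectField k]
    (d : ℕ) (t : ℕ) (ht1 : 1 ≤ t) (htd : t ≤ d) (htp : t ≤ p) (hmod : p ≡ 1 [MOD t])
    (f : MvPolynomial (Fin d) k) (hf : f = ∑ i, X i ^ t) :
    rootIdeal p 1 (f ^ (p - 1)) = ⊤ := by
  classical
  have hp : p.Prime := Fact.out
  have hp1 : 1 ≤ p := hp.one_lt.le
  have hd0 : 0 < d := by omega
  set n : ℕ := p - 1 with hn
  obtain ⟨s, hs⟩ : t ∣ n := (Nat.modEq_iff_dvd' hp1).mp hmod.symm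
  -- index function
  set idx : ℕ → Fin d := fun i => if h : i < d then ⟨i, h⟩ else ⟨0, hd0⟩ with hidxdef
  have hidxval : ∀ i < t, (idx i : ℕ) = i := by
    intro i hi
    simp only [hidxdef]
    rw [dif_pos (by omega)]
  have hidx : ∀ a < t, ∀ b < t, idx a = idx b → a = b := by
    intro a ha b hb hab
    have := congrArg (fun x : Fin d => (x : ℕ)) hab
    simpa [hidxval a ha, hidxval b hb] using this
  set A : Fin d →₀ ℕ := ∑ i ∈ Finset.range t, Finsupp.single (idx i) n with hA
  have hAx : ∀ x : Fin d, A x = if (x : ℕ) < t then n else 0 := by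
    intro x
    rw [hA, Finsupp.finset_sum_apply]
    have : ∀ i ∈ Finset.range t, (Finsupp.single (idx i) n) x
        = if i = (x : ℕ) then n else 0 := by
      intro i hi
      rw [Finset.mem_range] at hi
      rw [Finsupp.single_apply]
      congr 1
      simp only [eq_iff_iff]
      constructor
      · intro h; rw [← h, hidxval i hi]
      · intro h
        apply Fin.ext
        rw [hidxval i hi, h]
    rw [Finset.sum_congr rfl this, Finset.sum_ite_eq' (Finset.range t) (x : ℕ) fun _ => n]
    simp
  -- the distinguished exponent function
  set c₀ : Fin d → ℕ := fun i => if (i : ℕ) < t then s else 0 with hc₀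
  have hsum_c₀ : ∑ i : Fin d, c₀ i = n := by
    rw [Fin.sum_univ_eq_sum_range (fun i => if i < t then s else 0) d]
    rw [← Finset.sum_subset (Finset.range_subset_range.mpr htd)
      (fun x _ hx => by rw [Finset.mem_range] at hx; rw [if_neg hx])]
    have h1 : ∑ x ∈ Finset.range t, (if x < t then s else 0) = ∑ _x ∈ Finset.range t, s :=
      Finset.sum_congr rfl fun x hx => if_pos (Finset.mem_range.mp hx)
    rw [h1, Finset.sum_const, Finset.card_range, smul_eq_mul]
    exact hs.symm
  -- the coefficient of f^n at A
  have hcoeffA : coeff A (f ^ n) = (Nat.multinomial Finset.univ c₀ : k) := by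
    rw [hf, Finset.sum_pow_eq_sum_piAntidiag, coeff_sum]
    have hterm : ∀ c : Fin d → ℕ,
        coeff A ((Nat.multinomial Finset.univ c : MvPolynomial (Fin d) k)
          * ∏ i, (X i ^ t) ^ c i)
        = (Nat.multinomial Finset.univ c : k)
          * (if (∑ i : Fin d, Finsupp.single i (t * c i)) = A then 1 else 0) := by
      intro c
      have : ∀ i : Fin d, ((X i : MvPolynomial (Fin d) k) ^ t) ^ c i = X i ^ (t * c i) := by
        intro i; rw [← pow_mul]
      rw [Finset.prod_congr rfl fun i _ => this i, aux_prod_X_pow, ← C_eq_coe_nat,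
        coeff_C_mul, coeff_monomial]
    rw [Finset.sum_congr rfl fun c _ => hterm c]
    rw [Finset.sum_eq_single c₀]
    · rw [if_pos, mul_one]
      ext x
      rw [Finsupp.finset_sum_apply]
      simp only [Finsupp.single_apply]
      rw [Finset.sum_ite_eq' (Finset.univ : Finset (Fin d)) x fun i => t * c₀ i]
      rw [if_pos (Finset.mem_univ x), hAx x]
      simp only [hc₀]
      by_cases hx : (x : ℕ) < t
      · rw [if_pos hx, if_pos hx, ← hs]
      · rw [if_neg hx, if_neg hx, mul_zero]
    · intro b hb hbne
      rw [if_neg, mul_zero]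
      intro hbA
      apply hbne
      funext x
      have := congrArg (fun g : Fin d →₀ ℕ => g x) hbA
      simp only [Finsupp.finset_sum_apply, Finsupp.single_apply] at this
      rw [Finset.sum_ite_eq' (Finset.univ : Finset (Fin d)) x fun i => t * b i,
        if_pos (Finset.mem_univ x), hAx x] at this
      simp only [hc₀]
      by_cases hx : (x : ℕ) < t
      · rw [if_pos hx] at this ⊢
        rw [hs] at this
        exact Nat.eq_of_mul_eq_mul_left (by omega) this
      · rw [if_neg hx] at this ⊢
        rcases Nat.mul_eq_zero.mp this with h | h
        · omega
        · exact h
    · intro hc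
      exfalso
      apply hc
      rw [Finset.mem_piAntidiag]
      exact ⟨hsum_c₀, fun i _ => Finset.mem_univ i⟩
  -- the multinomial coefficient is nonzero in k
  have hmul_ne : (Nat.multinomial Finset.univ c₀ : k) ≠ 0 := by
    rw [Ne, CharP.cast_eq_zero_iff k p]
    intro hdvd
    have hspec := Nat.multinomial_spec Finset.univ c₀
    rw [hsum_c₀] at hspec
    have : p ∣ n.factorial := hspec ▸ Dvd.dvd.mul_left hdvd _
    rw [Nat.Prime.dvd_factorial hp] at this
    omega
  have hfact_ne : (n.factorial : k) ≠ 0 := by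
    rw [Ne, CharP.cast_eq_zero_iff k p, Nat.Prime.dvd_factorial hp]
    omega
  -- the constant produced by the operator
  set D : MvPolynomial (Fin d) k → MvPolynomial (Fin d) k := DD n idx t with hD
  set c : k := (n.factorial : k) ^ t * (Nat.multinomial Finset.univ c₀ : k) with hc
  have hc_ne : c ≠ 0 := mul_ne_zero (pow_ne_zero _ hfact_ne) hmul_ne
  have hDf : D (f ^ n) = C c := by
    have hdeg : (D (f ^ n)).totalDegree ≤ 0 := by
      apply DD_totalDegree
      calc (f ^ n).totalDegree ≤ n * f.totalDegree := totalDegree_pow f n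
        _ ≤ n * t := by
            apply Nat.mul_le_mul_left
            rw [hf]
            exact (totalDegree_finset_sum _ _).trans
              (Finset.sup_le fun i _ => by rw [totalDegree_X_pow])
        _ ≤ 0 + t * n := by rw [zero_add, mul_comm]
    have hdeg0 : (D (f ^ n)).totalDegree = 0 := Nat.le_zero.mp hdeg
    have hcoeff0 : coeff 0 (D (f ^ n)) = c := by
      rw [hD, DD_coeff n idx t hidx _ 0 (fun i _ => rfl), zero_add, ← hA, hcoeffA, hc]
    ext m
    rw [coeff_C]
    by_cases hm : (0 : Fin d →₀ ℕ) = m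
    · rw [if_pos hm, ← hm, hcoeff0]
    · rw [if_neg hm]
      by_contra hne
      have hmem : m ∈ (D (f ^ n)).support := mem_support_iff.mpr hne
      apply hm
      ext x
      rw [Finsupp.zero_apply]
      exact ((totalDegree_eq_zero_iff _ _).mp hdeg0 m hmem x).symm
  -- membership argument
  have hpk : (p : k) = 0 := CharP.cast_eq_zero k p
  have key : ∀ J : Ideal (MvPolynomial (Fin d) k), f ^ n ∈ bracketPow p J → J = ⊤ := by
    intro J hmem
    have hDmem : ∀ g, g ∈ bracketPow p J → ∀ r : MvPolynomial (Fin d) k, D (r * g) ∈ J := by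
      intro g hg
      refine Submodule.span_induction ?_ ?_ ?_ ?_ hg
      · rintro x ⟨u, hu, rfl⟩ r
        rw [hD, DD_mul_pow p hpk]
        exact Ideal.mul_mem_left J _ (Ideal.pow_mem_of_mem J hu p (by omega))
      · intro r
        rw [mul_zero]
        have : D (0 : MvPolynomial (Fin d) k) = 0 := by
          have := DD_add n idx t (0 : MvPolynomial (Fin d) k) 0
          simpa using this
        rw [this]
        exact J.zero_mem
      · intro x y hx hy hxJ hyJ r
        rw [mul_add, hD, DD_add]
        exact J.add_mem (hxJ r) (hyJ r)
      · intro a x hx hxJ r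
        rw [smul_eq_mul, ← mul_assoc]
        exact hxJ (r * a)
    have h1 : D (1 * f ^ n) ∈ J := hDmem _ hmem 1
    rw [one_mul, hDf] at h1
    rw [Ideal.eq_top_iff_one]
    have := J.mul_mem_left (C c⁻¹) h1
    rwa [← map_mul, inv_mul_cancel₀ hc_ne, map_one] at this
  rw [rootIdeal, sInf_eq_top]
  intro J hJ
  rw [Set.mem_setOf_eq, pow_one] at hJ
  exact key J hJ
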